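/- For every ordered graph H, there exists a (finite simple) graph H' such that, for every linear ordering of the vertex set of H', the resulting ordered graph contains H. -/

import Mathlib

/-- The max-degree from `X` to `Y`: the maximum over `v ∈ X` of the number of
neighbours of `v` in `Y` (0 if `X` is empty). -/
noncomputable def maxDegFrom {V : Type} (G : SimpleGraph V) (X Y : Set V) : ℕ :=
  sSup ((fun v => (G.neighborSet v ∩ Y).ncard) '' X)

/-- `X` is anticomplete to `Y`: there are no edges between them. -/
def AnticompSets {V : Type} (G : SimpleGraph V) (X Y : Set V) : Prop :=
  ∀ x ∈ X, ∀ y ∈ Y, ¬ G.Adj x y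

/-- A pure pair: disjoint sets, complete or anticomplete to each other. -/
def PurePair {V : Type} (G : SimpleGraph V) (Z1 Z2 : Set V) : Prop :=
  Disjoint Z1 Z2 ∧ ((∀ x ∈ Z1, ∀ y ∈ Z2, G.Adj x y) ∨ AnticompSets G Z1 Z2)

/-- `X` covers `B`: every vertex of `B` has a neighbour in `X`. -/
def CoversSet {V : Type} (G : SimpleGraph V) (X B : Set V) : Prop :=
  ∀ v ∈ B, ∃ x ∈ X, G.Adj x v

/-- `G` contains `H` as an induced subgraph. -/
def GraphContains {V W : Type} (G : SimpleGraph V) (H : SimpleGraph W) : Prop :=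
  ∃ f : W → V, Function.Injective f ∧ ∀ a b : W, G.Adj (f a) (f b) ↔ H.Adj a b

/-- The ordered graph `G` contains the ordered graph `H`: an order-preserving
induced-subgraph embedding. -/
def OrdGraphContains {V W : Type} [LinearOrder V] [LinearOrder W]
    (G : SimpleGraph V) (H : SimpleGraph W) : Prop :=
  ∃ f : W → V, StrictMono f ∧ ∀ a b : W, G.Adj (f a) (f b) ↔ H.Adj a b

/-- A blockade: a family of pairwise disjoint nonempty vertex subsets indexed by
a finite set of integers. -/
def IsBlockade {V : Type} (I : Finset ℤ) (B : ℤ → Set V) : Prop :=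
  (∀ i ∈ I, (B i).Nonempty) ∧ ∀ i ∈ I, ∀ j ∈ I, i ≠ j → Disjoint (B i) (B j)

/-- A blockade in an ordered graph: additionally the blocks are intervals
numbered in order. -/
def IsOrdBlockade {V : Type} [LinearOrder V] (I : Finset ℤ) (B : ℤ → Set V) : Prop :=
  IsBlockade I B ∧ ∀ i ∈ I, ∀ j ∈ I, i < j → ∀ u ∈ B i, ∀ v ∈ B j, u < v

/-- The blockade `(B i : i ∈ I)` has width at least `w`
(the width being the minimum cardinality of a block, `|G|` if `I = ∅`). -/
def WidthGE {V : Type} [Fintype V] (I : Finset ℤ) (B : ℤ → Set V) (w : ℝ) : Prop :=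
  (∀ i ∈ I, w ≤ ((B i).ncard : ℝ)) ∧ w ≤ (Fintype.card V : ℝ)

/-- The width of a blockade: the minimum cardinality of a block (`|G|` if `I = ∅`). -/
noncomputable def blockadeWidth {V : Type} [Fintype V] (I : Finset ℤ) (B : ℤ → Set V) : ℕ :=
  if h : I.Nonempty then I.inf' h (fun i => (B i).ncard) else Fintype.card V

/-- The blockade has shrinkage at most `s`: its width is at least `|G|^(1-s)`. -/
def ShrinkageLE {V : Type} [Fintype V] (I : Finset ℤ) (B : ℤ → Set V) (s : ℝ) : Prop :=
  WidthGE I B ((Fintype.card V : ℝ) ^ ((1 : ℝ) - s))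

/-- The blockade has linkage at most `lam`: for all distinct `i, j`, the
max-degree from `B i` to `B j` is at most `lam * |B j|`. -/
def LinkageLE {V : Type} (G : SimpleGraph V) (I : Finset ℤ) (B : ℤ → Set V) (lam : ℝ) : Prop :=
  ∀ i ∈ I, ∀ j ∈ I, i ≠ j → (maxDegFrom G (B i) (B j) : ℝ) ≤ lam * ((B j).ncard : ℝ)

/-- The blockade is `(phi, mu)`-shrink-resistant. -/
def ShrinkResistant {V : Type} [Fintype V] (G : SimpleGraph V) (I : Finset ℤ)
    (B : ℤ → Set V) (phi mu : ℝ) : Prop :=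
  ∀ h ∈ I, ∀ j ∈ I, h ≠ j → ∀ X ⊆ B h, ∀ Y ⊆ B j,
    mu * ((B h).ncard : ℝ) ≤ (X.ncard : ℝ) → mu * ((B j).ncard : ℝ) ≤ (Y.ncard : ℝ) →
    (maxDegFrom G (B h) (B j) : ℝ) * (Fintype.card V : ℝ) ^ (-phi) < (maxDegFrom G X Y : ℝ)

/-- `tau` is a `(phi, mu)`-band for the blockade `(B i : i ∈ I)`. -/
def IsBand {V : Type} [Fintype V] (G : SimpleGraph V) (I : Finset ℤ)
    (B : ℤ → Set V) (tau phi mu : ℝ) : Prop :=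
  ∀ h ∈ I, ∀ j ∈ I, h ≠ j →
    ((maxDegFrom G (B h) (B j) : ℝ) ≤ tau * ((B j).ncard : ℝ)) ∧
    ∀ X ⊆ B h, ∀ Y ⊆ B j,
      mu * ((B h).ncard : ℝ) ≤ (X.ncard : ℝ) → mu * ((B j).ncard : ℝ) ≤ (Y.ncard : ℝ) →
      tau * (Fintype.card V : ℝ) ^ (-phi) * ((B j).ncard : ℝ) < (maxDegFrom G X Y : ℝ)

/-- There do not exist disjoint anticomplete sets both of size at least `|G|^(1-c)`. -/
def NoBigAnticomp {V : Type} [Fintype V] (G : SimpleGraph V) (c : ℝ) : Prop :=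
  ¬ ∃ Z1 Z2 : Set V, Disjoint Z1 Z2 ∧ AnticompSets G Z1 Z2 ∧
      (Fintype.card V : ℝ) ^ ((1 : ℝ) - c) ≤ (Z1.ncard : ℝ) ∧
      (Fintype.card V : ℝ) ^ ((1 : ℝ) - c) ≤ (Z2.ncard : ℝ)

/-- The blockade `(B i : i ∈ H ∪ I ∪ J)` is leaf-covered with partition `(H, I, J)`
and parameters `w, W, lam, phi, mu, tau`. -/
def LeafCovered {V : Type} [Fintype V] (G : SimpleGraph V) (H I J : Finset ℤ)
    (B : ℤ → Set V) (w W lam phi mu tau : ℝ) : Prop :=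
  WidthGE H B w ∧ LinkageLE G H B lam ∧ WidthGE I B W ∧
  (∀ h ∈ H, ∀ j ∈ J, ∃ X ⊆ B j, CoversSet G X (B h) ∧
      ∀ i ∈ (H ∪ I).erase h, AnticompSets G X (B i)) ∧
  IsBand G (I ∪ J) B tau phi mu ∧
  (∀ h ∈ H, ∀ i ∈ I ∪ J, (maxDegFrom G (B h) (B i) : ℝ) ≤ tau * ((B i).ncard : ℝ))

/-- The clique number of a graph. -/
noncomputable def cliqueNumber {V : Type} (G : SimpleGraph V) : ℕ :=
  sSup {n | ∃ s : Finset V, G.IsNClique n s}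

namespace RW

abbrev Vd (d : ℕ) : Type := Fin d → ZMod 2

def dot {d : ℕ} (x y : Vd d) : ZMod 2 := ∑ i, x i * y i

lemma dot_comm {d : ℕ} (x y : Vd d) : dot x y = dot y x :=
  Finset.sum_congr rfl fun i _ => mul_comm _ _

def dotG (d : ℕ) : SimpleGraph (Vd d) where
  Adj x y := x ≠ y ∧ dot x y = 1
  symm := ⟨fun x y h => ⟨Ne.symm h.1, (dot_comm y x).trans h.2⟩⟩
  loopless := ⟨fun x h => h.1 rfl⟩

instance {d : ℕ} : DecidableRel (dotG d).Adj := fun x y =>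
  inferInstanceAs (Decidable (x ≠ y ∧ dot x y = 1))

noncomputable def chi (u : ZMod 2) : ℝ := if u = 0 then 1 else -1

lemma chi_zero : chi 0 = 1 := if_pos rfl

lemma chi_one : chi 1 = -1 := if_neg (by decide)

lemma chi_add (u v : ZMod 2) : chi (u + v) = chi u * chi v := by
  have h : ∀ w : ZMod 2, w = 0 ∨ w = 1 := by decide
  have e : (1 + 1 : ZMod 2) = 0 := by decide
  rcases h u with hu | hu <;> rcases h v with hv | hv <;> subst hu <;> subst hv <;>
    simp only [zero_add, add_zero, e, chi_zero, chi_one] <;> norm_num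

lemma chi_sum {ι : Type} (t : Finset ι) (f : ι → ZMod 2) :
    chi (∑ i ∈ t, f i) = ∏ i ∈ t, chi (f i) := by
  classical
  induction t using Finset.cons_induction with
  | empty => simp [chi_zero]
  | cons a t ha ih => rw [Finset.sum_cons, Finset.prod_cons, chi_add, ih]

lemma sum_chi_univ : ∑ u : ZMod 2, chi u = 0 := by
  rw [show (Finset.univ : Finset (ZMod 2)) = {0, 1} from by decide]
  rw [Finset.sum_insert (by decide), Finset.sum_singleton, chi_zero, chi_one]
  norm_num

lemma sum_char {d : ℕ} (c : Vd d) (hc : c ≠ 0) : ∑ a : Vd d, chi (dot a c) = 0 := by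
  have h1 : ∀ a : Vd d, chi (dot a c) = ∏ i, chi (a i * c i) := fun a => chi_sum _ _
  simp_rw [h1]
  rw [← Fintype.piFinset_univ,
    ← Finset.prod_univ_sum (fun _ : Fin d => (Finset.univ : Finset (ZMod 2)))
      (fun i u => chi (u * c i))]
  obtain ⟨i, hi⟩ := Function.ne_iff.mp hc
  have hci : c i = 1 := by
    have : ∀ u : ZMod 2, u ≠ 0 → u = 1 := by decide
    exact this _ hi
  apply Finset.prod_eq_zero (Finset.mem_univ i)
  rw [hci]
  simpa using sum_chi_univ

lemma dot_add {d : ℕ} (a b b' : Vd d) : dot a (b + b') = dot a b + dot a b' := by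
  unfold dot
  rw [← Finset.sum_add_distrib]
  exact Finset.sum_congr rfl fun i _ => by simp [mul_add]

lemma add_self {d : ℕ} (v : Vd d) : v + v = 0 := by
  funext i
  have : ∀ u : ZMod 2, u + u = 0 := by decide
  exact this _

lemma add_eq_zero_iff {d : ℕ} (v w : Vd d) : v + w = 0 ↔ v = w := by
  constructor
  · intro h
    calc v = v + (w + w) := by rw [add_self, add_zero]
    _ = (v + w) + w := by abel
    _ = 0 + w := by rw [h]
    _ = w := zero_add w
  · rintro rfl; exact add_self v

lemma card_Vd (d : ℕ) : Fintype.card (Vd d) = 2 ^ d := by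
  rw [Fintype.card_fun, ZMod.card, Fintype.card_fin]

lemma sum_sq {d : ℕ} (B : Finset (Vd d)) :
    ∑ a : Vd d, (∑ b ∈ B, chi (dot a b)) ^ 2 = (B.card : ℝ) * 2 ^ d := by
  have expand : ∀ a : Vd d,
      (∑ b ∈ B, chi (dot a b)) ^ 2 = ∑ b ∈ B, ∑ b' ∈ B, chi (dot a (b + b')) := by
    intro a
    rw [sq, Finset.sum_mul_sum]
    exact Finset.sum_congr rfl fun b _ => Finset.sum_congr rfl fun b' _ => by
      rw [← chi_add, dot_add]
  simp_rw [expand]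
  rw [Finset.sum_comm]
  have inner : ∀ b ∈ B, (∑ a : Vd d, ∑ b' ∈ B, chi (dot a (b + b')))
      = ∑ b' ∈ B, if b = b' then ((2:ℝ) ^ d) else 0 := by
    intro b _
    rw [Finset.sum_comm]
    refine Finset.sum_congr rfl fun b' _ => ?_
    by_cases h : b = b'
    · subst h
      rw [if_pos rfl]
      have : ∀ a : Vd d, chi (dot a (b + b)) = 1 := by
        intro a
        rw [add_self]
        have : dot a (0 : Vd d) = 0 := by simp [dot]
        rw [this, chi_zero]
      simp_rw [this]
      rw [Finset.sum_const, Finset.card_univ, card_Vd]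
      push_cast
      ring
    · rw [if_neg h]
      exact sum_char _ (fun hz => h ((add_eq_zero_iff b b').mp hz))
  rw [Finset.sum_congr rfl inner]
  simp_rw [Finset.sum_ite_eq]
  simp [Finset.sum_const]


def Good {d : ℕ} (a : Vd d) (B : Finset (Vd d)) : Prop :=
  B.card ≤ 4 * (B.filter fun b => (dotG d).Adj a b).card ∧
  B.card ≤ 4 * (B.filter fun b => ¬ (dotG d).Adj a b).card

instance {d : ℕ} (a : Vd d) (B : Finset (Vd d)) : Decidable (Good a B) := by
  unfold Good; infer_instance

lemma bad_count {d : ℕ} (A B : Finset (Vd d)) (hd : Disjoint A B) :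
    (A.filter fun a => ¬ Good a B).card * B.card ≤ 4 * 2 ^ d := by
  rcases Nat.eq_zero_or_pos B.card with hB | hB
  · rw [hB, mul_zero]; exact Nat.zero_le _
  set bad := A.filter fun a => ¬ Good a B with hbad
  set F : Vd d → ℝ := fun a => ∑ b ∈ B, chi (dot a b) with hF
  have key : ∀ a ∈ bad, (B.card : ℝ) ^ 2 ≤ 4 * (F a) ^ 2 := by
    intro a ha
    rw [hbad, Finset.mem_filter] at ha
    obtain ⟨haA, hnG⟩ := ha
    have haB : a ∉ B := Finset.disjoint_left.mp hd haA
    set e := (B.filter fun b => dot a b = 1).card with he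
    have hfilt : B.filter (fun b => (dotG d).Adj a b) = B.filter fun b => dot a b = 1 := by
      apply Finset.filter_congr
      intro b hb
      have : a ≠ b := fun h => haB (h ▸ hb)
      simp [dotG, this]
    have hsplit : e + (B.filter fun b => ¬ (dotG d).Adj a b).card = B.card := by
      rw [he, ← hfilt]
      exact Finset.card_filter_add_card_filter_not (fun b => (dotG d).Adj a b)
    have hFa : F a = (B.card : ℝ) - 2 * e := by
      show (∑ b ∈ B, chi (dot a b)) = (B.card : ℝ) - 2 * e
      have h1 : ∑ b ∈ B, chi (dot a b)
          = (∑ b ∈ B.filter (fun b => dot a b = 1), chi (dot a b))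
            + ∑ b ∈ B.filter (fun b => ¬ (dot a b = 1)), chi (dot a b) :=
        (Finset.sum_filter_add_sum_filter_not B _ _).symm
      have h2 : ∀ b ∈ B.filter (fun b => dot a b = 1), chi (dot a b) = -1 := by
        intro b hb
        rw [(Finset.mem_filter.mp hb).2, chi_one]
      have h3 : ∀ b ∈ B.filter (fun b => ¬ (dot a b = 1)), chi (dot a b) = 1 := by
        intro b hb
        have hb2 := (Finset.mem_filter.mp hb).2
        have : dot a b = 0 := by
          have : ∀ u : ZMod 2, u ≠ 1 → u = 0 := by decide
          exact this _ hb2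
        rw [this, chi_zero]
      rw [h1, Finset.sum_congr rfl h2, Finset.sum_congr rfl h3, Finset.sum_const,
        Finset.sum_const, ← he]
      have h4 : (B.filter fun b => ¬ (dot a b = 1)).card = B.card - e := by
        have := Finset.card_filter_add_card_filter_not
          (s := B) (p := fun b => dot a b = 1)
        omega
      rw [h4]
      have heB : e ≤ B.card := by omega
      simp only [nsmul_eq_mul, mul_one, mul_neg_one, smul_eq_mul, Nat.cast_sub heB]
      ring
    unfold Good at hnG
    push_neg at hnG
    rw [hfilt, ← he] at hnG
    rcases lt_or_ge (4 * e) B.card with hcase | hcase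
    · -- few neighbours
      have : (4 * e : ℝ) + 1 ≤ (B.card : ℝ) := by exact_mod_cast hcase
      rw [hFa]
      nlinarith [this]
    · have h5 := hnG hcase
      set e2 := (B.filter fun b => ¬ (dotG d).Adj a b).card with he2
      have hc2 : (e : ℝ) + (e2 : ℝ) = (B.card : ℝ) := by exact_mod_cast hsplit
      have h5R : 4 * (e2 : ℝ) + 1 ≤ (B.card : ℝ) := by exact_mod_cast h5
      rw [hFa]
      have hA : (1:ℝ) ≤ (B.card : ℝ) - 4 * e2 := by linarith
      have hB2 : (0:ℝ) ≤ 3 * (B.card : ℝ) - 4 * e2 := by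
        have : (0:ℝ) ≤ (e2 : ℝ) := by positivity
        linarith
      nlinarith [hA, hB2, mul_nonneg (by linarith : (0:ℝ) ≤ (B.card : ℝ) - 4 * e2) hB2, hc2]
  have sum1 : (bad.card : ℝ) * (B.card : ℝ) ^ 2 ≤ 4 * ((B.card : ℝ) * 2 ^ d) := by
    calc (bad.card : ℝ) * (B.card : ℝ) ^ 2 = ∑ _a ∈ bad, (B.card : ℝ) ^ 2 := by
          rw [Finset.sum_const]; ring
    _ ≤ ∑ a ∈ bad, 4 * (F a) ^ 2 := Finset.sum_le_sum key
    _ = 4 * ∑ a ∈ bad, (F a) ^ 2 := by rw [Finset.mul_sum]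
    _ ≤ 4 * ∑ a : Vd d, (F a) ^ 2 := by
          apply mul_le_mul_of_nonneg_left _ (by norm_num)
          exact Finset.sum_le_sum_of_subset_of_nonneg (Finset.subset_univ bad)
            (fun a _ _ => sq_nonneg _)
    _ = 4 * ((B.card : ℝ) * 2 ^ d) := by rw [sum_sq]
  have hBpos : (0 : ℝ) < (B.card : ℝ) := by exact_mod_cast hB
  have : (bad.card : ℝ) * (B.card : ℝ) ≤ 4 * 2 ^ d := by
    nlinarith [sum1, hBpos]
  exact_mod_cast this


lemma embed (d s : ℕ) [LinearOrder (Vd d)] :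
    ∀ (m : ℕ) (K : SimpleGraph (Fin m)) (C : Fin m → Finset (Vd d)),
      (∀ i j : Fin m, i < j → ∀ x ∈ C i, ∀ y ∈ C j, x < y) →
      (∀ i, 4 ^ m * s ≤ (C i).card) →
      m * 2 ^ d < s ^ 2 →
      ∃ f : Fin m → Vd d, (∀ i, f i ∈ C i) ∧
        ∀ a b : Fin m, a < b → ((dotG d).Adj (f a) (f b) ↔ K.Adj a b) := by
  intro m
  induction m with
  | zero =>
    intro K C _ _ _
    exact ⟨Fin.elim0, fun i => i.elim0, fun a => a.elim0⟩
  | succ m ih =>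
    intro K C horder hsize hnum
    classical
    have hnum' : m * 2 ^ d < s ^ 2 :=
      lt_of_le_of_lt (Nat.mul_le_mul_right _ (Nat.le_succ m)) hnum
    have hspos : 0 < s := by
      rcases Nat.eq_zero_or_pos s with h | h
      · subst h; simp at hnum
      · exact h
    set M := 4 ^ (m + 1) * s with hM
    have hMpos : 0 < M := by positivity
    have hdisj : ∀ j : Fin m, Disjoint (C 0) (C j.succ) := by
      intro j
      rw [Finset.disjoint_left]
      intro x hx0 hxj
      exact absurd (horder 0 j.succ (Fin.succ_pos j) x hx0 x hxj) (lt_irrefl x)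
    have hbadM : ∀ j : Fin m,
        ((C 0).filter fun x => ¬ Good x (C j.succ)).card * M ≤ 4 * 2 ^ d := by
      intro j
      calc ((C 0).filter fun x => ¬ Good x (C j.succ)).card * M
          ≤ ((C 0).filter fun x => ¬ Good x (C j.succ)).card * (C j.succ).card :=
            Nat.mul_le_mul_left _ (hsize j.succ)
      _ ≤ 4 * 2 ^ d := bad_count _ _ (hdisj j)
    have hT : (∑ j : Fin m, ((C 0).filter fun x => ¬ Good x (C j.succ)).card) * M
        ≤ m * (4 * 2 ^ d) := by
      rw [Finset.sum_mul]
      calc ∑ j : Fin m, ((C 0).filter fun x => ¬ Good x (C j.succ)).card * M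
          ≤ ∑ _j : Fin m, 4 * 2 ^ d := Finset.sum_le_sum fun j _ => hbadM j
      _ = m * (4 * 2 ^ d) := by
            rw [Finset.sum_const, Finset.card_univ, Fintype.card_fin, smul_eq_mul]
    have h6 : 4 ≤ 4 ^ (m + 1) := by
      calc (4:ℕ) = 4 ^ 1 := (pow_one 4).symm
      _ ≤ 4 ^ (m + 1) := Nat.pow_le_pow_right (by norm_num) (by omega)
    have hM4 : 4 * s ≤ M := by rw [hM]; exact Nat.mul_le_mul_right s h6
    have h2 : m * (4 * 2 ^ d) < M * M := by
      calc m * (4 * 2 ^ d) = 4 * (m * 2 ^ d) := by ring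
      _ < 4 * s ^ 2 := mul_lt_mul_of_pos_left hnum' (by norm_num)
      _ ≤ (4 * s) * (4 * s) := by nlinarith
      _ ≤ M * M := Nat.mul_le_mul hM4 hM4
    have hTM : (∑ j : Fin m, ((C 0).filter fun x => ¬ Good x (C j.succ)).card) < M :=
      lt_of_mul_lt_mul_right (lt_of_le_of_lt hT h2) (Nat.zero_le M)
    have hCM : M ≤ (C 0).card := hsize 0
    have hsub : ((C 0).filter fun x => ¬ ∀ j : Fin m, Good x (C j.succ))
        ⊆ Finset.univ.biUnion fun j : Fin m =>
            (C 0).filter fun x => ¬ Good x (C j.succ) := by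
      intro x hx
      rw [Finset.mem_filter] at hx
      obtain ⟨hx1, hx2⟩ := hx
      push_neg at hx2
      obtain ⟨j, hj⟩ := hx2
      exact Finset.mem_biUnion.mpr ⟨j, Finset.mem_univ j, Finset.mem_filter.mpr ⟨hx1, hj⟩⟩
    have hgood : ((C 0).filter fun x => ∀ j : Fin m, Good x (C j.succ)).Nonempty := by
      rw [← Finset.card_pos]
      by_contra hz
      push_neg at hz
      have hz0 : ((C 0).filter fun x => ∀ j : Fin m, Good x (C j.succ)).card = 0 := by omega
      have h7 := Finset.card_filter_add_card_filter_not
        (s := C 0) (p := fun x => ∀ j : Fin m, Good x (C j.succ))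
      have h8 : ((C 0).filter fun x => ¬ ∀ j : Fin m, Good x (C j.succ)).card
          ≤ ∑ j : Fin m, ((C 0).filter fun x => ¬ Good x (C j.succ)).card :=
        le_trans (Finset.card_le_card hsub) Finset.card_biUnion_le
      omega
    obtain ⟨x, hx⟩ := hgood
    rw [Finset.mem_filter] at hx
    obtain ⟨hx0, hxg⟩ := hx
    set C' : Fin m → Finset (Vd d) := fun j =>
      if K.Adj 0 j.succ then (C j.succ).filter fun y => (dotG d).Adj x y
      else (C j.succ).filter fun y => ¬ (dotG d).Adj x y with hC'
    have hC'sub : ∀ j, C' j ⊆ C j.succ := by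
      intro j
      rw [hC']
      dsimp only
      split_ifs <;> exact Finset.filter_subset _ _
    have hC'size : ∀ j, 4 ^ m * s ≤ (C' j).card := by
      intro j
      have hgj := hxg j
      have h9 : 4 * (4 ^ m * s) = 4 ^ (m + 1) * s := by ring
      rw [hC']
      dsimp only
      split_ifs with hKa
      · have h10 : 4 * (4 ^ m * s) ≤ 4 * ((C j.succ).filter fun y => (dotG d).Adj x y).card := by
          rw [h9]; exact le_trans (hsize j.succ) hgj.1
        exact Nat.le_of_mul_le_mul_left h10 (by norm_num)
      · have h10 : 4 * (4 ^ m * s) ≤ 4 * ((C j.succ).filter fun y => ¬ (dotG d).Adj x y).card := by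
          rw [h9]; exact le_trans (hsize j.succ) hgj.2
        exact Nat.le_of_mul_le_mul_left h10 (by norm_num)
    have horder' : ∀ i j : Fin m, i < j → ∀ x' ∈ C' i, ∀ y' ∈ C' j, x' < y' :=
      fun i j hij x' hx' y' hy' =>
        horder i.succ j.succ (Fin.succ_lt_succ_iff.mpr hij) x' (hC'sub i hx') y' (hC'sub j hy')
    obtain ⟨g, hgmem, hgadj⟩ := ih (SimpleGraph.comap Fin.succ K) C' horder' hC'size hnum'
    refine ⟨Fin.cases x g, ?_, ?_⟩
    · intro i
      refine Fin.cases ?_ ?_ i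
      · simpa using hx0
      · intro j
        simpa using hC'sub j (hgmem j)
    · intro a b hab
      rcases Fin.eq_zero_or_eq_succ b with hb | ⟨j, hb⟩
      · exact absurd (hb ▸ hab) (Fin.not_lt_zero a)
      rcases Fin.eq_zero_or_eq_succ a with ha | ⟨i, ha⟩
      · subst ha
        subst hb
        simp only [Fin.cases_zero, Fin.cases_succ]
        have hmem := hgmem j
        rw [hC'] at hmem
        dsimp only at hmem
        by_cases hKa : K.Adj 0 j.succ
        · rw [if_pos hKa] at hmem
          exact iff_of_true (Finset.mem_filter.mp hmem).2 hKa
        · rw [if_neg hKa] at hmem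
          exact iff_of_false (Finset.mem_filter.mp hmem).2 hKa
      · subst ha
        subst hb
        simp only [Fin.cases_succ]
        exact hgadj i j (Fin.succ_lt_succ_iff.mp hab)

end RW

open RW

/-- Rödl–Winkler: For every ordered graph `H`, there exists a finite
graph `H'` such that for every linear ordering of the vertex set of `H'`, the
resulting ordered graph contains `H`. -/
theorem stmt_18 {W : Type} [Fintype W] [LinearOrder W] (H : SimpleGraph W) :
    ∃ (n : ℕ) (H' : SimpleGraph (Fin n)),
      ∀ L : LinearOrder (Fin n),
        ∃ f : W → Fin n, (∀ a b : W, a < b → L.lt (f a) (f b)) ∧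
          ∀ a b : W, H'.Adj (f a) (f b) ↔ H.Adj a b := by
  classical
  set k := Fintype.card W with hk
  set d := 7 * k + 2 with hd
  set s := 2 ^ (4 * k + 2) with hs
  set u := 2 ^ (6 * k + 2) with hu
  have hW : Fintype.card W = k := hk.symm
  let ordW : Fin k ≃o W := monoEquivOfFin W hW
  have hcard : Fintype.card (Vd d) = 2 ^ d := card_Vd d
  let e : Vd d ≃ Fin (2 ^ d) := Fintype.equivFinOfCardEq hcard
  refine ⟨2 ^ d, SimpleGraph.comap (⇑e.symm) (dotG d), ?_⟩
  intro L
  letI : LinearOrder (Vd d) := @LinearOrder.lift' (Vd d) (Fin (2 ^ d)) L ⇑e e.injective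
  have hlt : ∀ X Y : Vd d, X < Y ↔ L.lt (e X) (e Y) := fun X Y => Iff.rfl
  let φ : Fin (2 ^ d) ≃o Vd d := monoEquivOfFin (Vd d) hcard
  have hku : k * u ≤ 2 ^ d := by
    have h1 : k ≤ 2 ^ k := (Nat.lt_two_pow_self (n := k)).le
    calc k * u ≤ 2 ^ k * u := Nat.mul_le_mul_right u h1
    _ = 2 ^ d := by rw [hu, hd, ← pow_add]; ring_nf
  have hbound : ∀ (i : Fin k) (t : Fin u), i.val * u + t.val < 2 ^ d := by
    intro i t
    have h1 : (i.val + 1) * u ≤ k * u := Nat.mul_le_mul_right u i.isLt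
    have h2 := t.isLt
    have h3 : i.val * u + u = (i.val + 1) * u := by ring
    omega
  let C : Fin k → Finset (Vd d) := fun i =>
    Finset.image (fun t : Fin u => φ ⟨i.val * u + t.val, hbound i t⟩) Finset.univ
  have hinj : ∀ i : Fin k,
      Function.Injective (fun t : Fin u => φ ⟨i.val * u + t.val, hbound i t⟩) := by
    intro i t t' h
    have h2 := φ.injective h
    rw [Fin.mk.injEq] at h2
    exact Fin.ext (by omega)
  have hcardC : ∀ i, (C i).card = u := by
    intro i
    rw [Finset.card_image_of_injective _ (hinj i), Finset.card_univ, Fintype.card_fin]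
  have husu : 4 ^ k * s = u := by
    have h1 : (4 : ℕ) ^ k = 2 ^ (2 * k) := by rw [pow_mul]; norm_num
    rw [h1, hs, hu, ← pow_add]
    ring_nf
  have hsizeC : ∀ i, 4 ^ k * s ≤ (C i).card := by
    intro i; rw [hcardC i, husu]
  have horderC : ∀ i j : Fin k, i < j → ∀ x ∈ C i, ∀ y ∈ C j, x < y := by
    intro i j hij x hx y hy
    obtain ⟨t, _, rfl⟩ := Finset.mem_image.mp hx
    obtain ⟨t', _, rfl⟩ := Finset.mem_image.mp hy
    rw [φ.lt_iff_lt, Fin.mk_lt_mk]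
    have h1 : (i.val + 1) * u ≤ j.val * u := Nat.mul_le_mul_right u hij
    have h2 := t.isLt
    have h3 : i.val * u + u = (i.val + 1) * u := by ring
    omega
  have hnumC : k * 2 ^ d < s ^ 2 := by
    have h1 : s ^ 2 = 2 ^ (8 * k + 4) := by
      rw [hs, ← pow_mul]; ring_nf
    have h2 : k * 2 ^ d < 2 ^ k * 2 ^ d :=
      mul_lt_mul_of_pos_right (Nat.lt_two_pow_self (n := k)) (pow_pos (by norm_num) d)
    calc k * 2 ^ d < 2 ^ k * 2 ^ d := h2
    _ = 2 ^ (k + d) := by rw [← pow_add]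
    _ ≤ 2 ^ (8 * k + 4) := Nat.pow_le_pow_right (by norm_num) (by omega)
    _ = s ^ 2 := h1.symm
  obtain ⟨F, hFmem, hFadj⟩ := embed d s k (SimpleGraph.comap (⇑ordW) H) C horderC hsizeC hnumC
  refine ⟨fun w => e (F (ordW.symm w)), ?_, ?_⟩
  · intro a b hab
    have h1 : ordW.symm a < ordW.symm b := (OrderIso.lt_iff_lt _).mpr hab
    have h2 := horderC _ _ h1 _ (hFmem (ordW.symm a)) _ (hFmem (ordW.symm b))
    exact (hlt _ _).mp h2
  · have key : ∀ a b : W, a < b →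
        ((dotG d).Adj (F (ordW.symm a)) (F (ordW.symm b)) ↔ H.Adj a b) := by
      intro a b hab
      have h1 : ordW.symm a < ordW.symm b := (OrderIso.lt_iff_lt _).mpr hab
      have h2 := hFadj _ _ h1
      rw [h2]
      show H.Adj (ordW (ordW.symm a)) (ordW (ordW.symm b)) ↔ H.Adj a b
      rw [OrderIso.apply_symm_apply, OrderIso.apply_symm_apply]
    intro a b
    have hsimp : (SimpleGraph.comap (⇑e.symm) (dotG d)).Adj (e (F (ordW.symm a))) (e (F (ordW.symm b)))
        ↔ (dotG d).Adj (F (ordW.symm a)) (F (ordW.symm b)) := by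
      show (dotG d).Adj (e.symm (e _)) (e.symm (e _)) ↔ _
      rw [Equiv.symm_apply_apply, Equiv.symm_apply_apply]
    rw [hsimp]
    rcases lt_trichotomy a b with h | h | h
    · exact key a b h
    · subst h
      exact iff_of_false (SimpleGraph.irrefl _) (SimpleGraph.irrefl _)
    · rw [SimpleGraph.adj_comm, H.adj_comm]
      exact key b a h
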